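/- arXiv:1708.01582 — 3 statements merged into one kernel-verified Lean document; each statement's English description precedes it below -/
import Mathlib

section
/- If σ = 0 and β = −λ_sig·I for some λ_sig ∈ ℝ, then for every q ≥ 1, every k ≥ 1 and all θ, ϑ ∈ ℝ^p, the contraction bound is attained with equality: W_q(π_k^θ, π_k^ϑ) = exp(−kΔλ_sig)·‖θ − ϑ‖. -/
open MeasureTheory Filter Matrix
open scoped ENNReal NNReal RealInnerProductSpace BigOperators

noncomputable section

abbrev Euc (p : ℕ) := EuclideanSpace ℝ (Fin p)

/-- A strictly positive function is log-concave. -/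
def IsLogConcave {p : ℕ} (f : Euc p → ℝ) : Prop :=
  ∀ u v : Euc p, ∀ c : ℝ, 0 ≤ c → c ≤ 1 →
    c * Real.log (f u) + (1 - c) * Real.log (f v) ≤ Real.log (f (c • u + (1 - c) • v))

/-- `μ` is the Gaussian measure on `ℝ^p` with mean `m` and covariance matrix `S`,
characterized through its one-dimensional marginals (a Dirac mass when `S = 0`). -/
def IsGaussianWith {p : ℕ} (μ : Measure (Euc p)) (m : Euc p)
    (S : Matrix (Fin p) (Fin p) ℝ) : Prop :=
  ∀ v : Euc p, μ.map (fun x => ⟪v, x⟫) =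
    ProbabilityTheory.gaussianReal ⟪v, m⟫ (Real.toNNReal (∑ i, ∑ j, v i * S i j * v j))

/-- The matrix exponential `e^{tβ}`. -/
def matExp {p : ℕ} (β : Matrix (Fin p) (Fin p) ℝ) (t : ℝ) : Matrix (Fin p) (Fin p) ℝ :=
  NormedSpace.exp (t • β)

/-- Mean of the transition distribution of the linear SDE:
`a_t + e^{βt} θ` with `a_t = e^{βt} ∫_0^t e^{-βs} α ds`. -/
def meanAt {p : ℕ} (α : Euc p) (β : Matrix (Fin p) (Fin p) ℝ) (t : ℝ) (θ : Euc p) : Euc p :=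
  WithLp.toLp 2 fun i => (matExp β t).mulVec (fun j => ∫ s in (0:ℝ)..t, (matExp β (-s)).mulVec α j) i
    + (matExp β t).mulVec θ i

/-- Covariance of the transition distribution:
`Σ_t = σ² ∫_0^t e^{β(t-s)} (e^{β(t-s)})ᵀ ds`. -/
def covAt {p : ℕ} (β : Matrix (Fin p) (Fin p) ℝ) (σ t : ℝ) : Matrix (Fin p) (Fin p) ℝ :=
  Matrix.of fun i j =>
    σ ^ 2 * ∫ s in (0:ℝ)..t, (matExp β (t - s) * (matExp β (t - s))ᵀ) i j

/-- The family `P` is the Gaussian transition kernel of the linear SDE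
`dθ_t = (α + β θ_t) dt + σ dB_t`. -/
def IsLinearSDEKernel {p : ℕ} (P : ℝ → Euc p → Measure (Euc p)) (α : Euc p)
    (β : Matrix (Fin p) (Fin p) ℝ) (σ : ℝ) : Prop :=
  ∀ t : ℝ, 0 < t → ∀ θ : Euc p, IsProbabilityMeasure (P t θ) ∧
    IsGaussianWith (P t θ) (meanAt α β t θ) (covAt β σ t)

/-- `phiAux P g n j = φ_{j, j+n}`. -/
def phiAux {p : ℕ} (P : Euc p → Measure (Euc p)) (g : ℕ → Euc p → ℝ) :
    ℕ → ℕ → Euc p → ℝ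
  | 0, j => g j
  | n + 1, j => fun θ => g j θ * ∫ ϑ, phiAux P g n (j + 1) ϑ ∂(P θ)

/-- `φ_{j,k}`, with `φ_{k,k} = g_k` and `φ_{j,k} = g_j ⬝ P_Δ φ_{j+1,k}`. -/
def phi {p : ℕ} (P : Euc p → Measure (Euc p)) (g : ℕ → Euc p → ℝ) (j k : ℕ) : Euc p → ℝ :=
  phiAux P g (k - j) j

/-- The reweighted Markov kernel `R_{j,k}(θ, dϑ) = P_Δ(θ,dϑ) φ_{j,k}(ϑ) / (P_Δ φ_{j,k})(θ)`. -/
def Rker {p : ℕ} (P : Euc p → Measure (Euc p)) (g : ℕ → Euc p → ℝ) (j k : ℕ)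
    (θ : Euc p) : Measure (Euc p) :=
  (ENNReal.ofReal (∫ ϑ, phi P g j k ϑ ∂(P θ)))⁻¹ •
    ((P θ).withDensity fun ϑ => ENNReal.ofReal (phi P g j k ϑ))

/-- The filtering distribution `π_k^θ = R_{1,k} R_{2,k} ⋯ R_{k,k}(θ, ⬝)`. -/
def filterPt {p : ℕ} (P : Euc p → Measure (Euc p)) (g : ℕ → Euc p → ℝ) (k : ℕ)
    (θ : Euc p) : Measure (Euc p) :=
  (List.range k).foldl (fun μ i => μ.bind (Rker P g (i + 1) k)) (Measure.dirac θ)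

/-- The order-`q` Wasserstein distance (valued in `ℝ≥0∞`). -/
def wassersteinDist {p : ℕ} (q : ℝ) (μ ν : Measure (Euc p)) : ℝ≥0∞ :=
  ⨅ (γ : Measure (Euc p × Euc p)) (_ : γ.map Prod.fst = μ) (_ : γ.map Prod.snd = ν),
    (∫⁻ x, (‖x.1 - x.2‖₊ : ℝ≥0∞) ^ q ∂γ) ^ (1 / q)

/-- `l` is the smallest (real) eigenvalue of `M`. -/
def IsSmallestEigenval {p : ℕ} (M : Matrix (Fin p) (Fin p) ℝ) (l : ℝ) : Prop :=
  l ∈ spectrum ℝ M ∧ ∀ x ∈ spectrum ℝ M, l ≤ x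

/-- `l` is the largest (real) eigenvalue of `M`. -/
def IsLargestEigenval {p : ℕ} (M : Matrix (Fin p) (Fin p) ℝ) (l : ℝ) : Prop :=
  l ∈ spectrum ℝ M ∧ ∀ x ∈ spectrum ℝ M, x ≤ l

/-- Assumption G: each `g_k` is positive, `C²` and strongly log-concave with constant `λ_g(k) ≥ 0`. -/
def AssumptionG {p : ℕ} (g : ℕ → Euc p → ℝ) (lg : ℕ → ℝ) : Prop :=
  ∀ k : ℕ, (∀ θ, 0 < g k θ) ∧ ContDiff ℝ 2 (g k) ∧ 0 ≤ lg k ∧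
    ∃ gt : Euc p → ℝ, (∀ θ, 0 < gt θ) ∧ IsLogConcave gt ∧
      ∀ θ, g k θ = Real.exp (-(lg k / 2) * ⟪θ, θ⟫) * gt θ

end

noncomputable section

namespace FilterEqAux

open MeasureTheory Measure

variable {p : ℕ}

lemma matExp_neg_smul_one (lsig t : ℝ) :
    matExp ((-lsig) • (1 : Matrix (Fin p) (Fin p) ℝ)) t = Real.exp (-(t * lsig)) • 1 := by
  rw [matExp, smul_smul, Matrix.smul_one_eq_diagonal, Matrix.exp_diagonal,
    Matrix.smul_one_eq_diagonal]
  congr 1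
  funext i
  rw [Pi.exp_def, ← Real.exp_eq_exp_ℝ]
  congr 1
  ring

lemma meanAt_form (α : Euc p) (lsig Δ : ℝ) :
    ∃ c : Euc p, ∀ θ : Euc p,
      meanAt α ((-lsig) • (1 : Matrix (Fin p) (Fin p) ℝ)) Δ θ
        = c + Real.exp (-(Δ * lsig)) • θ := by
  refine ⟨WithLp.toLp 2 fun i => (matExp ((-lsig) • (1 : Matrix (Fin p) (Fin p) ℝ)) Δ).mulVec
      (fun j => ∫ s in (0:ℝ)..Δ,
        (matExp ((-lsig) • (1 : Matrix (Fin p) (Fin p) ℝ)) (-s)).mulVec α j) i, fun θ => ?_⟩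
  ext i
  simp only [meanAt, matExp_neg_smul_one, Matrix.smul_mulVec, Matrix.one_mulVec,
    PiLp.add_apply, PiLp.smul_apply, Pi.smul_apply, smul_eq_mul]

lemma withDensity_dirac' {β : Type*} [MeasurableSpace β] [MeasurableSingletonClass β]
    (a : β) (f : β → ℝ≥0∞) : (Measure.dirac a).withDensity f = f a • Measure.dirac a := by
  ext s hs
  classical
  rw [withDensity_apply _ hs, Measure.smul_apply, smul_eq_mul, setLIntegral_dirac f s,
    Measure.dirac_apply' a hs]
  by_cases h : a ∈ s <;> simp [h]

section Kernel

variable (Pk : Euc p → Measure (Euc p)) (g : ℕ → Euc p → ℝ) (m : Euc p → Euc p)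
  (hm : Measurable m) (hPd : ∀ θ, Pk θ = Measure.dirac (m θ))
  (hgm : ∀ k, Measurable (g k)) (hgpos : ∀ k θ, 0 < g k θ)

include hm hPd hgm hgpos in
lemma phiAux_pos_meas : ∀ n j : ℕ,
    (∀ θ, 0 < phiAux Pk g n j θ) ∧ Measurable (phiAux Pk g n j) := by
  intro n
  induction n with
  | zero => exact fun j => ⟨hgpos j, hgm j⟩
  | succ n ih =>
    intro j
    have heq : phiAux Pk g (n + 1) j = fun θ => g j θ * phiAux Pk g n (j + 1) (m θ) := by
      funext θ
      simp [phiAux, hPd θ, integral_dirac]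
    rw [heq]
    exact ⟨fun θ => mul_pos (hgpos j θ) ((ih (j + 1)).1 (m θ)),
      (hgm j).mul ((ih (j + 1)).2.comp hm)⟩

include hm hPd hgm hgpos in
lemma Rker_dirac (j k : ℕ) (θ : Euc p) : Rker Pk g j k θ = Measure.dirac (m θ) := by
  obtain ⟨hpos, hmeas⟩ := phiAux_pos_meas Pk g m hm hPd hgm hgpos (k - j) j
  have hphi : phi Pk g j k = phiAux Pk g (k - j) j := rfl
  rw [Rker, hphi, hPd θ, integral_dirac,
    withDensity_dirac' (m θ) (fun ϑ => ENNReal.ofReal (phiAux Pk g (k - j) j ϑ))]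
  have hc0 : ENNReal.ofReal (phiAux Pk g (k - j) j (m θ)) ≠ 0 :=
    (ENNReal.ofReal_pos.2 (hpos (m θ))).ne'
  rw [smul_smul, ENNReal.inv_mul_cancel hc0 ENNReal.ofReal_ne_top, one_smul]

include hm hPd hgm hgpos in
lemma foldl_bind_dirac (k : ℕ) : ∀ (l : List ℕ) (θ : Euc p),
    List.foldl (fun μ i => μ.bind (Rker Pk g (i + 1) k)) (Measure.dirac θ) l
      = Measure.dirac (m^[l.length] θ) := by
  intro l
  induction l with
  | nil => intro θ; rfl
  | cons i t ih =>
    intro θ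
    have hR : Rker Pk g (i + 1) k = fun x => Measure.dirac (m x) :=
      funext fun x => Rker_dirac Pk g m hm hPd hgm hgpos (i + 1) k x
    have hb : (Measure.dirac θ).bind (Rker Pk g (i + 1) k) = Measure.dirac (m θ) := by
      rw [hR]
      exact Measure.dirac_bind (f := fun x => Measure.dirac (m x))
        (Measure.measurable_dirac.comp hm) θ
    show List.foldl _ ((Measure.dirac θ).bind (Rker Pk g (i + 1) k)) t = _
    rw [hb, ih (m θ), List.length_cons, Function.iterate_succ_apply]

include hm hPd hgm hgpos in
lemma filterPt_dirac (k : ℕ) (θ : Euc p) :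
    filterPt Pk g k θ = Measure.dirac (m^[k] θ) := by
  have := foldl_bind_dirac Pk g m hm hPd hgm hgpos k (List.range k) θ
  rwa [List.length_range] at this

end Kernel

lemma wasserstein_dirac (q : ℝ) (hq : 1 ≤ q) (a b : Euc p) :
    wassersteinDist q (Measure.dirac a) (Measure.dirac b) = (‖a - b‖₊ : ℝ≥0∞) := by
  have hq0 : q ≠ 0 := by linarith
  have hrw : ((‖a - b‖₊ : ℝ≥0∞) ^ q) ^ (1 / q) = (‖a - b‖₊ : ℝ≥0∞) := by
    rw [← ENNReal.rpow_mul, mul_one_div_cancel hq0, ENNReal.rpow_one]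
  have hpow : ∀ γ : Measure (Euc p × Euc p),
      γ.map Prod.fst = Measure.dirac a → γ.map Prod.snd = Measure.dirac b →
      ∫⁻ x, (‖x.1 - x.2‖₊ : ℝ≥0∞) ^ q ∂γ = (‖a - b‖₊ : ℝ≥0∞) ^ q := by
    intro γ h1 h2
    have hfst : γ {x : Euc p × Euc p | x.1 ≠ a} = 0 := by
      have := Measure.map_apply (μ := γ) measurable_fst
        (MeasurableSet.compl (measurableSet_singleton a))
      rw [h1] at this
      have h0 : Measure.dirac a ({a}ᶜ : Set (Euc p)) = 0 := by simp
      rw [h0] at this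
      exact this.symm
    have hsnd : γ {x : Euc p × Euc p | x.2 ≠ b} = 0 := by
      have := Measure.map_apply (μ := γ) measurable_snd
        (MeasurableSet.compl (measurableSet_singleton b))
      rw [h2] at this
      have h0 : Measure.dirac b ({b}ᶜ : Set (Euc p)) = 0 := by simp
      rw [h0] at this
      exact this.symm
    have hae : ∀ᵐ x ∂γ, x = (a, b) := by
      rw [ae_iff]
      refine measure_mono_null ?_ (measure_union_null hfst hsnd)
      intro x hx
      by_contra h
      simp only [Set.mem_union, Set.mem_setOf_eq, not_or, not_not] at h
      exact hx (Prod.ext h.1 h.2)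
    have huniv : γ Set.univ = 1 := by
      have := Measure.map_apply (μ := γ) measurable_fst MeasurableSet.univ
      rw [h1] at this
      simpa using this.symm
    calc ∫⁻ x, (‖x.1 - x.2‖₊ : ℝ≥0∞) ^ q ∂γ
        = ∫⁻ _, (‖a - b‖₊ : ℝ≥0∞) ^ q ∂γ :=
          lintegral_congr_ae (hae.mono fun x hx => by rw [hx])
      _ = (‖a - b‖₊ : ℝ≥0∞) ^ q * γ Set.univ := lintegral_const _
      _ = (‖a - b‖₊ : ℝ≥0∞) ^ q := by rw [huniv, mul_one]
  apply le_antisymm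
  · have h1 : (Measure.dirac ((a, b) : Euc p × Euc p)).map Prod.fst = Measure.dirac a :=
      Measure.map_dirac' measurable_fst _
    have h2 : (Measure.dirac ((a, b) : Euc p × Euc p)).map Prod.snd = Measure.dirac b :=
      Measure.map_dirac' measurable_snd _
    refine iInf_le_of_le (Measure.dirac ((a, b) : Euc p × Euc p))
      (iInf_le_of_le h1 (iInf_le_of_le h2 ?_))
    rw [hpow _ h1 h2, hrw]
  · refine le_iInf fun γ => le_iInf fun h1 => le_iInf fun h2 => ?_
    rw [hpow γ h1 h2, hrw]

end FilterEqAux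

end

noncomputable section

/-- When `σ = 0` and `β = -λ_sig I` the contraction bound is attained with equality. -/
theorem filter_wasserstein_equality_deterministic_signal
    {p : ℕ} (Δ : ℝ) (hΔ : 0 < Δ) (α : Euc p) (lsig : ℝ)
    (P : ℝ → Euc p → Measure (Euc p))
    (hP : ∀ t : ℝ, 0 < t → ∀ θ : Euc p,
      P t θ = Measure.dirac (meanAt α ((-lsig) • (1 : Matrix (Fin p) (Fin p) ℝ)) t θ))
    (g : ℕ → Euc p → ℝ) (hgm : ∀ k, Measurable (g k)) (hgpos : ∀ k θ, 0 < g k θ) :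
    ∀ q : ℝ, 1 ≤ q → ∀ k : ℕ, 1 ≤ k → ∀ θ ϑ : Euc p,
      wassersteinDist q (filterPt (P Δ) g k θ) (filterPt (P Δ) g k ϑ) =
        ENNReal.ofReal (Real.exp (-(k * Δ * lsig)) * ‖θ - ϑ‖) := by
  intro q hq k hk θ ϑ
  obtain ⟨c, hc⟩ := FilterEqAux.meanAt_form α lsig Δ
  set e : ℝ := Real.exp (-(Δ * lsig)) with he
  set m : Euc p → Euc p := meanAt α ((-lsig) • (1 : Matrix (Fin p) (Fin p) ℝ)) Δ with hmdef
  have hm : Measurable m := by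
    have hfun : m = fun x => c + e • x := funext hc
    rw [hfun]
    exact (measurable_id.const_smul e).const_add c
  have hPd : ∀ x : Euc p, P Δ x = Measure.dirac (m x) := hP Δ hΔ
  have hdiff : ∀ n : ℕ, ∀ x y : Euc p, m^[n] x - m^[n] y = e ^ n • (x - y) := by
    intro n
    induction n with
    | zero => intro x y; simp
    | succ n ih =>
      intro x y
      rw [Function.iterate_succ_apply', Function.iterate_succ_apply', hc, hc,
        add_sub_add_left_eq_sub, ← smul_sub, ih, smul_smul, ← pow_succ']
  have hek : e ^ k = Real.exp (-(↑k * Δ * lsig)) := by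
    rw [he, ← Real.exp_nat_mul]
    congr 1
    ring
  rw [FilterEqAux.filterPt_dirac (P Δ) g m hm hPd hgm hgpos k θ,
    FilterEqAux.filterPt_dirac (P Δ) g m hm hPd hgm hgpos k ϑ,
    FilterEqAux.wasserstein_dirac q hq, hdiff k θ ϑ, ← enorm_eq_nnnorm, ← ofReal_norm,
    norm_smul, Real.norm_eq_abs, abs_of_nonneg (pow_nonneg (Real.exp_pos _).le k), hek]

end
end

section
/- Let Δ > 0, α ∈ ℝ^p, β a p×p real matrix, σ ≥ 0, let λ_sig be the smallest eigenvalue of −(β+βᵀ)/2, let λ_h : [0,Δ] → [0,∞) be continuous, and let b : ℝ^p×[0,Δ] → ℝ^p be such that for every s ∈ [0,Δ] and all u, v ∈ ℝ^p, (b(u,s) − b(v,s))ᵀ(u − v) ≤ −λ_h(s)‖u − v‖². Let w : [0,Δ] → ℝ^p be continuous and let θ, ϑ : [0,Δ] → ℝ^p be continuous paths satisfying the integral equations θ_t = θ_0 + ∫_0^t (α + βθ_s + σ²·b(θ_s,s)) ds + σ·w(t) and ϑ_t = ϑ_0 + ∫_0^t (α + βϑ_s + σ²·b(ϑ_s,s))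 ds + σ·w(t) for all t ∈ [0,Δ]. Then ‖θ_Δ − ϑ_Δ‖ ≤ exp(−∫_0^Δ (λ_sig + σ²λ_h(t)) dt)·‖θ_0 − ϑ_0‖. -/
open MeasureTheory Filter Matrix
open scoped ENNReal NNReal RealInnerProductSpace BigOperators

noncomputable section

private theorem quad_bound {p : ℕ} (β : Matrix (Fin p) (Fin p) ℝ) (lsig : ℝ)
    (h2 : ∀ x ∈ spectrum ℝ (-((1:ℝ)/2) • (β + βᵀ)), lsig ≤ x)
    (x : Euc p) : ⟪Matrix.toEuclideanLin β x, x⟫ ≤ -lsig * ‖x‖^2 := by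
  classical
  set A : Matrix (Fin p) (Fin p) ℝ := -((1:ℝ)/2) • (β + βᵀ) with hAdef
  have hA : A.IsHermitian := by
    simp [Matrix.IsHermitian, hAdef, Matrix.conjTranspose_eq_transpose_of_trivial,
      Matrix.transpose_add, add_comm]
  have hB : (A - algebraMap ℝ _ lsig).IsHermitian := by
    apply hA.sub
    simp [Matrix.IsHermitian, Matrix.algebraMap_eq_diagonal,
      Matrix.conjTranspose_eq_transpose_of_trivial, Matrix.diagonal_transpose]
  have hps : (A - algebraMap ℝ _ lsig).PosSemidef := by
    apply hB.posSemidef_iff_eigenvalues_nonneg.mpr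
    intro i
    have hmem := hB.eigenvalues_mem_spectrum_real i
    rw [← spectrum.sub_singleton_eq] at hmem
    obtain ⟨a, ha, b, hb, heq⟩ := hmem
    rw [Set.mem_singleton_iff] at hb
    have := h2 a ha
    simp only [hb] at heq
    simp only [← heq]
    show (0:ℝ) ≤ a - lsig
    linarith
  have key := hps.dotProduct_mulVec_nonneg ((WithLp.equiv 2 (Fin p → ℝ)) x)
  set y : Fin p → ℝ := (WithLp.equiv 2 (Fin p → ℝ)) x with hy
  have hxy : ∀ i, x i = y i := fun i => rfl
  have hsub : ((A - algebraMap ℝ _ lsig) *ᵥ y) = A *ᵥ y - lsig • y := by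
    simp [Matrix.sub_mulVec, Matrix.algebraMap_eq_diagonal, Matrix.diagonal_mulVec_single]
    ext i
    simp [Matrix.mulVec_diagonal]
  rw [hsub] at key
  have hstar : star y = y := rfl
  rw [hstar] at key
  have hAx : y ⬝ᵥ (A *ᵥ y) = -(y ⬝ᵥ (β *ᵥ y)) := by
    rw [hAdef]
    have h1 : y ⬝ᵥ (βᵀ *ᵥ y) = y ⬝ᵥ (β *ᵥ y) := by
      rw [Matrix.dotProduct_mulVec, Matrix.vecMul_transpose, dotProduct_comm]
    simp only [Matrix.add_mulVec, dotProduct_add, neg_smul, Matrix.neg_mulVec,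
      dotProduct_neg, Matrix.smul_mulVec, dotProduct_smul, h1, smul_eq_mul]
    ring
  have hinner : ⟪Matrix.toEuclideanLin β x, x⟫ = y ⬝ᵥ (β *ᵥ y) := by
    rw [Matrix.toEuclideanLin_apply]
    simp [PiLp.inner_apply, dotProduct, RCLike.inner_apply, mul_comm]
    exact Finset.sum_congr rfl fun i _ => mul_comm _ _
  have hnorm : ‖x‖^2 = y ⬝ᵥ y := by
    rw [← real_inner_self_eq_norm_sq]
    simp [PiLp.inner_apply, dotProduct]
    rw [EuclideanSpace.norm_eq, Real.sq_sqrt (by positivity)]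
    exact Finset.sum_congr rfl fun i _ => by rw [Real.norm_eq_abs, sq_abs, sq, hxy]
  have hdsub : y ⬝ᵥ (A *ᵥ y - lsig • y) = y ⬝ᵥ (A *ᵥ y) - lsig * (y ⬝ᵥ y) := by
    simp [dotProduct_sub, dotProduct_smul, smul_eq_mul]
  rw [hdsub, hAx] at key
  rw [hinner, hnorm]
  linarith

private theorem tri_swap {T : ℝ} (H : ℝ → ℝ → ℝ)
    (hi : Integrable (fun q : ℝ × ℝ => H q.1 q.2)
      ((volume.restrict (Set.Ioc 0 T)).prod (volume.restrict (Set.Ioc 0 T)))) :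
    ∫ s in Set.Ioc 0 T, (∫ r in Set.Ioc 0 s, H s r) =
      ∫ r in Set.Ioc 0 T, (∫ s in Set.Ioc r T, H s r) := by
  classical
  set f : ℝ → ℝ → ℝ := fun s r => ({q : ℝ × ℝ | q.2 ≤ q.1}.indicator
    (fun q => H q.1 q.2)) (s, r) with hf
  have hmeas : MeasurableSet {q : ℝ × ℝ | q.2 ≤ q.1} :=
    measurableSet_le measurable_snd measurable_fst
  have hfi : Integrable (fun q : ℝ × ℝ => f q.1 q.2)
      ((volume.restrict (Set.Ioc 0 T)).prod (volume.restrict (Set.Ioc 0 T))) := by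
    simpa [hf] using hi.indicator hmeas
  have hL : ∀ s ∈ Set.Ioc 0 T, (∫ r in Set.Ioc 0 s, H s r) = ∫ r in Set.Ioc 0 T, f s r := by
    intro s hs
    have h1 : (fun r => f s r) = (Set.Iic s).indicator (fun r => H s r) := by
      funext r
      simp only [hf, Set.indicator_apply, Set.mem_setOf_eq, Set.mem_Iic]
    rw [h1, setIntegral_indicator measurableSet_Iic]
    congr 1
    rw [Set.Ioc_inter_Iic, min_eq_right hs.2]
  have hR : ∀ r ∈ Set.Ioc 0 T, (∫ s in Set.Ioc r T, H s r) = ∫ s in Set.Ioc 0 T, f s r := by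
    intro r hr
    have h1 : (fun s => f s r) = (Set.Ici r).indicator (fun s => H s r) := by
      funext s
      simp only [hf, Set.indicator_apply, Set.mem_setOf_eq, Set.mem_Ici]
    rw [h1, setIntegral_indicator measurableSet_Ici]
    have h2 : Set.Ioc 0 T ∩ Set.Ici r = Set.Icc r T := by
      ext z
      simp only [Set.mem_inter_iff, Set.mem_Ioc, Set.mem_Ici, Set.mem_Icc]
      constructor
      · rintro ⟨⟨_, hzT⟩, hrz⟩; exact ⟨hrz, hzT⟩
      · rintro ⟨hrz, hzT⟩; exact ⟨⟨lt_of_lt_of_le hr.1 hrz, hzT⟩, hrz⟩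
    rw [h2, integral_Icc_eq_integral_Ioc]
  calc ∫ s in Set.Ioc 0 T, (∫ r in Set.Ioc 0 s, H s r)
      = ∫ s in Set.Ioc 0 T, ∫ r in Set.Ioc 0 T, f s r :=
        setIntegral_congr_fun measurableSet_Ioc hL
    _ = ∫ r in Set.Ioc 0 T, ∫ s in Set.Ioc 0 T, f s r := integral_integral_swap hfi
    _ = ∫ r in Set.Ioc 0 T, (∫ s in Set.Ioc r T, H s r) :=
        (setIntegral_congr_fun measurableSet_Ioc hR).symm

private theorem inner_ii {p : ℕ} {T : ℝ} (hT : 0 ≤ T) {G : ℝ → Euc p}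
    (hG : IntervalIntegrable G volume 0 T) {v : ℝ → Euc p}
    (hv : ContinuousOn v (Set.Icc 0 T)) :
    IntervalIntegrable (fun s => ⟪G s, v s⟫) volume 0 T := by
  rw [intervalIntegrable_iff_integrableOn_Ioc_of_le hT] at hG ⊢
  obtain ⟨C, hC⟩ := (isCompact_Icc (a := (0:ℝ)) (b := T)).exists_bound_of_continuousOn hv
  have hvm : AEStronglyMeasurable v (volume.restrict (Set.Ioc 0 T)) :=
    (hv.mono Set.Ioc_subset_Icc_self).aestronglyMeasurable measurableSet_Ioc
  refine Integrable.mono' (hG.norm.mul_const C) (hG.aestronglyMeasurable.inner hvm) ?_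
  filter_upwards [ae_restrict_mem measurableSet_Ioc] with s hs
  calc ‖⟪G s, v s⟫‖ ≤ ‖G s‖ * ‖v s‖ := norm_inner_le_norm _ _
    _ ≤ ‖G s‖ * C := by
        exact mul_le_mul_of_nonneg_left (hC s (Set.Ioc_subset_Icc_self hs)) (norm_nonneg _)

private theorem energy {p : ℕ} {T : ℝ} (hT : 0 ≤ T) {G e : ℝ → Euc p}
    (hG : IntervalIntegrable G volume 0 T) (he : ContinuousOn e (Set.Icc 0 T))
    (heq : ∀ t ∈ Set.Icc (0:ℝ) T, e t = e 0 + ∫ s in (0:ℝ)..t, G s) :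
    ‖e T‖^2 = ‖e 0‖^2 + ∫ s in (0:ℝ)..T, 2 * ⟪G s, e s⟫ := by
  set Φ : ℝ → Euc p := fun s => ∫ r in (0:ℝ)..s, G r with hΦdef
  have hΦ : ∀ s ∈ Set.Icc (0:ℝ) T, Φ s = e s - e 0 := by
    intro s hs; rw [heq s hs]; abel
  have hΦc : ContinuousOn Φ (Set.Icc 0 T) :=
    ((he.sub continuousOn_const).congr hΦ)
  have hGI : IntegrableOn G (Set.Ioc 0 T) volume :=
    (intervalIntegrable_iff_integrableOn_Ioc_of_le hT).1 hG
  have hmono : ∀ s ∈ Set.Icc (0:ℝ) T, IntegrableOn G (Set.Ioc 0 s) volume :=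
    fun s hs => hGI.mono_set (Set.Ioc_subset_Ioc le_rfl hs.2)
  have hΦIoc : ∀ s ∈ Set.Icc (0:ℝ) T, Φ s = ∫ r in Set.Ioc 0 s, G r := by
    intro s hs; exact intervalIntegral.integral_of_le hs.1
  -- product integrability
  have hprod : Integrable (fun q : ℝ × ℝ => ⟪G q.1, G q.2⟫)
      ((volume.restrict (Set.Ioc 0 T)).prod (volume.restrict (Set.Ioc 0 T))) := by
    have hm1 : AEStronglyMeasurable (fun q : ℝ × ℝ => G q.1)
        ((volume.restrict (Set.Ioc 0 T)).prod (volume.restrict (Set.Ioc 0 T))) :=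
      hGI.aestronglyMeasurable.comp_quasiMeasurePreserving
        Measure.quasiMeasurePreserving_fst
    have hm2 : AEStronglyMeasurable (fun q : ℝ × ℝ => G q.2)
        ((volume.restrict (Set.Ioc 0 T)).prod (volume.restrict (Set.Ioc 0 T))) :=
      hGI.aestronglyMeasurable.comp_quasiMeasurePreserving
        Measure.quasiMeasurePreserving_snd
    refine Integrable.mono' (hGI.norm.mul_prod hGI.norm) (hm1.inner hm2) ?_
    refine Filter.Eventually.of_forall fun q => ?_
    exact (norm_inner_le_norm _ _).trans (le_of_eq rfl)
  -- the triangle identity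
  have hA2 : (2:ℝ) * ∫ s in Set.Ioc 0 T, ⟪G s, Φ s⟫ = ‖Φ T‖^2 := by
    have h1 : ∫ s in Set.Ioc 0 T, ⟪G s, Φ s⟫
        = ∫ s in Set.Ioc 0 T, (∫ r in Set.Ioc 0 s, ⟪G s, G r⟫) := by
      refine setIntegral_congr_fun measurableSet_Ioc fun s hs => ?_
      have hs' : s ∈ Set.Icc (0:ℝ) T := Set.Ioc_subset_Icc_self hs
      rw [hΦIoc s hs', ← integral_inner (hmono s hs') (G s)]
    have h2 := tri_swap (fun s r => ⟪G s, G r⟫) hprod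
    have h3 : ∫ r in Set.Ioc 0 T, (∫ s in Set.Ioc r T, ⟪G s, G r⟫)
        = ∫ r in Set.Ioc 0 T, ⟪Φ T - Φ r, G r⟫ := by
      refine setIntegral_congr_fun measurableSet_Ioc fun r hr => ?_
      have hrT : IntegrableOn G (Set.Ioc r T) volume :=
        hGI.mono_set (Set.Ioc_subset_Ioc hr.1.le le_rfl)
      have : ∫ s in Set.Ioc r T, ⟪G s, G r⟫ = ⟪G r, ∫ s in Set.Ioc r T, G s⟫ := by
        rw [← integral_inner hrT (G r)]
        exact setIntegral_congr_fun measurableSet_Ioc fun s _ => real_inner_comm _ _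
      rw [this, real_inner_comm]
      congr 1
      rw [← intervalIntegral.integral_of_le hr.2,
        ← intervalIntegral.integral_interval_sub_left hG
          (hG.mono_set (by
            rw [Set.uIcc_of_le hT, Set.uIcc_of_le hr.1.le]
            exact Set.Icc_subset_Icc le_rfl hr.2))]
    have hc1 : Integrable (fun r => ⟪Φ T, G r⟫) (volume.restrict (Set.Ioc 0 T)) :=
      (innerSL ℝ (Φ T)).integrable_comp hGI
    have hc2 : Integrable (fun r => ⟪Φ r, G r⟫) (volume.restrict (Set.Ioc 0 T)) := by
      have := (intervalIntegrable_iff_integrableOn_Ioc_of_le hT).1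
        (inner_ii hT hG hΦc)
      refine this.congr (ae_restrict_of_forall_mem measurableSet_Ioc fun s _ => ?_)
      exact real_inner_comm _ _
    have h4 : ∫ r in Set.Ioc 0 T, ⟪Φ T - Φ r, G r⟫
        = (∫ r in Set.Ioc 0 T, ⟪Φ T, G r⟫) - ∫ r in Set.Ioc 0 T, ⟪Φ r, G r⟫ := by
      rw [← integral_sub hc1 hc2]
      exact setIntegral_congr_fun measurableSet_Ioc fun r _ => by
        rw [inner_sub_left]
    have h5 : ∫ r in Set.Ioc 0 T, ⟪Φ T, G r⟫ = ‖Φ T‖^2 := by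
      rw [integral_inner hGI (Φ T), ← hΦIoc T (Set.right_mem_Icc.2 hT),
        real_inner_self_eq_norm_sq]
    have h6 : ∫ r in Set.Ioc 0 T, ⟪Φ r, G r⟫ = ∫ r in Set.Ioc 0 T, ⟪G r, Φ r⟫ :=
      setIntegral_congr_fun measurableSet_Ioc fun r _ => real_inner_comm _ _
    beta_reduce at h2
    linarith [h1, h2, h3, h4, h5, h6]
  -- assemble
  have hsplit : ∫ s in (0:ℝ)..T, 2 * ⟪G s, e s⟫
      = 2 * ⟪Φ T, e 0⟫ + ‖Φ T‖^2 := by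
    rw [intervalIntegral.integral_const_mul, intervalIntegral.integral_of_le hT]
    have h7 : ∫ s in Set.Ioc 0 T, ⟪G s, e s⟫
        = (∫ s in Set.Ioc 0 T, ⟪G s, e 0⟫) + ∫ s in Set.Ioc 0 T, ⟪G s, Φ s⟫ := by
      rw [← integral_add]
      · refine setIntegral_congr_fun measurableSet_Ioc fun s hs => ?_
        have hs' : s ∈ Set.Icc (0:ℝ) T := Set.Ioc_subset_Icc_self hs
        have : e s = e 0 + Φ s := by rw [hΦ s hs']; abel
        rw [this, inner_add_right]
      · refine ((innerSL ℝ (e 0)).integrable_comp hGI).congr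
          (ae_restrict_of_forall_mem measurableSet_Ioc fun s _ => ?_)
        exact real_inner_comm (G s) (e 0)
      · have := (intervalIntegrable_iff_integrableOn_Ioc_of_le hT).1
          (inner_ii hT hG hΦc)
        exact this
    have h8 : ∫ s in Set.Ioc 0 T, ⟪G s, e 0⟫ = ⟪Φ T, e 0⟫ := by
      have : ∫ s in Set.Ioc 0 T, ⟪G s, e 0⟫ = ⟪e 0, ∫ s in Set.Ioc 0 T, G s⟫ := by
        rw [← integral_inner hGI (e 0)]
        exact setIntegral_congr_fun measurableSet_Ioc fun s _ => real_inner_comm _ _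
      rw [this, ← hΦIoc T (Set.right_mem_Icc.2 hT), real_inner_comm]
    rw [h7, h8]
    linarith [hA2]
  have h9 : e T = e 0 + Φ T := by
    rw [hΦ T (Set.right_mem_Icc.2 hT)]; abel
  rw [hsplit, h9, norm_add_sq_real]
  rw [real_inner_comm]
  ring


/-- Deterministic synchronous-coupling contraction: two solutions of the controlled
integral equation driven by the same path `w` contract at rate `λ_sig + σ²λ_h(t)`. -/
theorem synchronous_coupling_contraction
    {p : ℕ} (Δ : ℝ) (hΔ : 0 < Δ) (α : Euc p) (β : Matrix (Fin p) (Fin p) ℝ)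
    (σ : ℝ) (hσ : 0 ≤ σ)
    (lsig : ℝ) (hsig : IsSmallestEigenval (-((1:ℝ)/2) • (β + βᵀ)) lsig)
    (lh : ℝ → ℝ) (hlhc : ContinuousOn lh (Set.Icc 0 Δ))
    (hlh0 : ∀ t ∈ Set.Icc (0:ℝ) Δ, 0 ≤ lh t)
    (b : Euc p → ℝ → Euc p)
    (hb : ∀ s ∈ Set.Icc (0:ℝ) Δ, ∀ u v : Euc p,
      ⟪b u s - b v s, u - v⟫ ≤ -lh s * ‖u - v‖ ^ 2)
    (w θ ϑ : ℝ → Euc p)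
    (hw : ContinuousOn w (Set.Icc 0 Δ))
    (hθc : ContinuousOn θ (Set.Icc 0 Δ)) (hϑc : ContinuousOn ϑ (Set.Icc 0 Δ))
    (hθi : IntervalIntegrable
      (fun s => α + Matrix.toEuclideanLin β (θ s) + σ ^ 2 • b (θ s) s) volume 0 Δ)
    (hϑi : IntervalIntegrable
      (fun s => α + Matrix.toEuclideanLin β (ϑ s) + σ ^ 2 • b (ϑ s) s) volume 0 Δ)
    (hθeq : ∀ t ∈ Set.Icc (0:ℝ) Δ,
      θ t = θ 0 + (∫ s in (0:ℝ)..t, (α + Matrix.toEuclideanLin β (θ s) + σ ^ 2 • b (θ s) s))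
        + σ • w t)
    (hϑeq : ∀ t ∈ Set.Icc (0:ℝ) Δ,
      ϑ t = ϑ 0 + (∫ s in (0:ℝ)..t, (α + Matrix.toEuclideanLin β (ϑ s) + σ ^ 2 • b (ϑ s) s))
        + σ • w t) :
    ‖θ Δ - ϑ Δ‖ ≤ Real.exp (-(∫ t in (0:ℝ)..Δ, (lsig + σ ^ 2 * lh t))) * ‖θ 0 - ϑ 0‖ := by
  have hΔ0 : (0:ℝ) ≤ Δ := hΔ.le
  set e : ℝ → Euc p := fun t => θ t - ϑ t with hedef
  set G : ℝ → Euc p := fun s =>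
    Matrix.toEuclideanLin β (e s) + σ ^ 2 • (b (θ s) s - b (ϑ s) s) with hGdef
  have hGF : ∀ s : ℝ, (α + Matrix.toEuclideanLin β (θ s) + σ ^ 2 • b (θ s) s)
      - (α + Matrix.toEuclideanLin β (ϑ s) + σ ^ 2 • b (ϑ s) s) = G s := by
    intro s
    simp only [hGdef, hedef, map_sub, smul_sub]
    abel
  have hGii : IntervalIntegrable G volume 0 Δ := by
    have h := hθi.sub hϑi
    simpa only [hGF] using h
  have hec : ContinuousOn e (Set.Icc 0 Δ) := hθc.sub hϑc
  have hee : ∀ t ∈ Set.Icc (0:ℝ) Δ, e t = e 0 + ∫ s in (0:ℝ)..t, G s := by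
    intro t ht
    have hsub : Set.uIcc (0:ℝ) t ⊆ Set.uIcc (0:ℝ) Δ := by
      rw [Set.uIcc_of_le ht.1, Set.uIcc_of_le hΔ0]
      exact Set.Icc_subset_Icc le_rfl ht.2
    have h3 : ∫ s in (0:ℝ)..t, G s
        = (∫ s in (0:ℝ)..t, (α + Matrix.toEuclideanLin β (θ s) + σ ^ 2 • b (θ s) s))
          - ∫ s in (0:ℝ)..t, (α + Matrix.toEuclideanLin β (ϑ s) + σ ^ 2 • b (ϑ s) s) := by
      rw [← intervalIntegral.integral_sub (hθi.mono_set hsub) (hϑi.mono_set hsub)]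
      exact intervalIntegral.integral_congr fun s _ => (hGF s).symm
    simp only [hedef]
    rw [hθeq t ht, hϑeq t ht, h3]
    abel
  set u : ℝ → ℝ := fun t => ‖e t‖ ^ 2 with hudef
  set m : ℝ → ℝ := fun s => 2 * ⟪G s, e s⟫ with hmdef
  have hm_ii : IntervalIntegrable m volume 0 Δ := (inner_ii hΔ0 hGii hec).const_mul 2
  have hu : ∀ t ∈ Set.Icc (0:ℝ) Δ, u t = u 0 + ∫ s in (0:ℝ)..t, m s := by
    intro t ht
    have hsub : Set.uIcc (0:ℝ) t ⊆ Set.uIcc (0:ℝ) Δ := by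
      rw [Set.uIcc_of_le ht.1, Set.uIcc_of_le hΔ0]
      exact Set.Icc_subset_Icc le_rfl ht.2
    exact energy ht.1 (hGii.mono_set hsub) (hec.mono (Set.Icc_subset_Icc le_rfl ht.2))
      (fun s hs => hee s (Set.Icc_subset_Icc le_rfl ht.2 hs))
  have hms : ∀ s ∈ Set.Icc (0:ℝ) Δ, m s ≤ -(2 * (lsig + σ ^ 2 * lh s)) * u s := by
    intro s hs
    have hquad : ⟪Matrix.toEuclideanLin β (e s), e s⟫ ≤ -lsig * ‖e s‖ ^ 2 :=
      quad_bound β lsig hsig.2 (e s)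
    have hbs : ⟪b (θ s) s - b (ϑ s) s, e s⟫ ≤ -lh s * ‖e s‖ ^ 2 := hb s hs (θ s) (ϑ s)
    have hinner : ⟪G s, e s⟫ = ⟪Matrix.toEuclideanLin β (e s), e s⟫
        + σ ^ 2 * ⟪b (θ s) s - b (ϑ s) s, e s⟫ := by
      simp only [hGdef, inner_add_left, real_inner_smul_left]
    have hσ2 : (0:ℝ) ≤ σ ^ 2 := sq_nonneg σ
    have h5 := mul_le_mul_of_nonneg_left hbs hσ2
    simp only [hmdef, hudef]
    nlinarith [hquad, h5, hinner]
  set k : ℝ → ℝ := fun s => 2 * (lsig + σ ^ 2 * lh (max 0 (min s Δ))) with hkdef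
  have hproj : Continuous fun s : ℝ => max 0 (min s Δ) :=
    continuous_const.max (continuous_id.min continuous_const)
  have hmem : ∀ s : ℝ, max 0 (min s Δ) ∈ Set.Icc (0:ℝ) Δ := fun s =>
    ⟨le_max_left _ _, max_le hΔ0 (min_le_right _ _)⟩
  have hkc : Continuous k := by
    apply continuous_const.mul
    exact continuous_const.add (continuous_const.mul (hlhc.comp_continuous hproj hmem))
  have hkeq : ∀ s ∈ Set.Icc (0:ℝ) Δ, k s = 2 * (lsig + σ ^ 2 * lh s) := by
    intro s hs
    simp only [hkdef]
    rw [min_eq_left hs.2, max_eq_right hs.1]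
  set K : ℝ → ℝ := fun x => ∫ s in (0:ℝ)..x, k s with hKdef
  have hK' : ∀ x, HasDerivAt K (k x) x := fun x =>
    (hkc.integral_hasStrictDerivAt 0 x).hasDerivAt
  set E : ℝ → ℝ := fun x => Real.exp (K x) with hEdef
  have hEc : Continuous E :=
    Real.continuous_exp.comp (Differentiable.continuous fun x => (hK' x).differentiableAt)
  have hFTC : ∀ r t : ℝ, ∫ s in r..t, k s * E s = E t - E r := by
    intro r t
    apply intervalIntegral.integral_eq_sub_of_hasDerivAt
    · intro x _
      simpa [hEdef, mul_comm] using (hK' x).exp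
    · exact (hkc.mul hEc).intervalIntegrable _ _
  have hE0 : E 0 = 1 := by simp [hEdef, hKdef]
  have hEpos : ∀ x, 0 < E x := fun x => Real.exp_pos _
  have hmI : IntegrableOn m (Set.Ioc 0 Δ) volume :=
    (intervalIntegrable_iff_integrableOn_Ioc_of_le hΔ0).1 hm_ii
  have huc : ContinuousOn u (Set.Icc 0 Δ) := (hec.norm).pow 2
  have hkEI : IntegrableOn (fun s => k s * E s) (Set.Ioc 0 Δ) volume :=
    (hkc.mul hEc).integrableOn_Ioc
  have hkEuI : IntegrableOn (fun s => k s * E s * (u s - u 0)) (Set.Ioc 0 Δ) volume := by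
    have hcc : ContinuousOn (fun s => k s * E s * (u s - u 0)) (Set.Icc 0 Δ) :=
      ((hkc.mul hEc).continuousOn).mul (huc.sub continuousOn_const)
    exact (hcc.integrableOn_Icc).mono_set Set.Ioc_subset_Icc_self
  have hEmI : IntegrableOn (fun s => E s * m s) (Set.Ioc 0 Δ) volume := by
    have h6 : IntervalIntegrable (fun s => E s * m s) volume 0 Δ :=
      hm_ii.continuousOn_mul hEc.continuousOn
    exact (intervalIntegrable_iff_integrableOn_Ioc_of_le hΔ0).1 h6
  have hMint : ∀ s ∈ Set.Icc (0:ℝ) Δ, ∫ r in Set.Ioc 0 s, m r = u s - u 0 := by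
    intro s hs
    rw [← intervalIntegral.integral_of_le hs.1, hu s hs]
    ring
  have htri := tri_swap (fun s r => (k s * E s) * m r) (hkEI.mul_prod hmI)
  -- identity hB
  have hB : ∫ s in Set.Ioc 0 Δ, k s * E s * u s
      = u 0 * (E Δ - 1) + ∫ r in Set.Ioc 0 Δ, (E Δ - E r) * m r := by
    have e0 : ∀ s ∈ Set.Ioc (0:ℝ) Δ, k s * E s * u s
        = k s * E s * u 0 + k s * E s * (u s - u 0) := fun s _ => by ring
    rw [setIntegral_congr_fun measurableSet_Ioc e0,
      MeasureTheory.integral_add (hkEI.mul_const (u 0)) hkEuI]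
    have eA : ∫ s in Set.Ioc 0 Δ, k s * E s * u 0 = u 0 * (E Δ - 1) := by
      rw [MeasureTheory.integral_mul_const, ← intervalIntegral.integral_of_le hΔ0,
        hFTC 0 Δ, hE0]
      ring
    have eB : ∫ s in Set.Ioc 0 Δ, k s * E s * (u s - u 0)
        = ∫ r in Set.Ioc 0 Δ, (E Δ - E r) * m r := by
      have e1 : ∀ s ∈ Set.Ioc (0:ℝ) Δ, k s * E s * (u s - u 0)
          = ∫ r in Set.Ioc 0 s, (k s * E s) * m r := by
        intro s hs
        rw [MeasureTheory.integral_const_mul, hMint s (Set.Ioc_subset_Icc_self hs)]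
      rw [setIntegral_congr_fun measurableSet_Ioc e1, htri]
      refine setIntegral_congr_fun measurableSet_Ioc fun r hr => ?_
      rw [MeasureTheory.integral_mul_const, ← intervalIntegral.integral_of_le hr.2,
        hFTC r Δ]
    rw [eA, eB]
  -- final inequality at Δ
  have hSnonpos : ∫ s in Set.Ioc 0 Δ, (k s * E s * u s + E s * m s) ≤ 0 := by
    apply setIntegral_nonpos measurableSet_Ioc
    intro s hs
    have hs' : s ∈ Set.Icc (0:ℝ) Δ := Set.Ioc_subset_Icc_self hs
    have h7 : m s ≤ -(k s) * u s := by
      rw [hkeq s hs']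
      exact hms s hs'
    have h8 : k s * u s + m s ≤ 0 := by linarith
    have : k s * E s * u s + E s * m s = E s * (k s * u s + m s) := by ring
    rw [this]
    exact mul_nonpos_of_nonneg_of_nonpos (hEpos s).le h8
  have hSsplit : ∫ s in Set.Ioc 0 Δ, (k s * E s * u s + E s * m s)
      = E Δ * u Δ - u 0 := by
    rw [MeasureTheory.integral_add (by
        have hcc : ContinuousOn (fun s => k s * E s * u s) (Set.Icc 0 Δ) :=
          ((hkc.mul hEc).continuousOn).mul huc
        exact (hcc.integrableOn_Icc).mono_set Set.Ioc_subset_Icc_self) hEmI, hB]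
    have e2 : ∫ r in Set.Ioc 0 Δ, (E Δ - E r) * m r
        = E Δ * (∫ r in Set.Ioc 0 Δ, m r) - ∫ r in Set.Ioc 0 Δ, E r * m r := by
      rw [← MeasureTheory.integral_const_mul, ← MeasureTheory.integral_sub
        (hmI.const_mul (E Δ)) hEmI]
      exact setIntegral_congr_fun measurableSet_Ioc fun r _ => by ring
    rw [e2, hMint Δ (Set.right_mem_Icc.2 hΔ0)]
    ring
  have hCineq : E Δ * u Δ ≤ u 0 := by linarith [hSnonpos, hSsplit.symm.le, hSsplit.le]
  -- compute K Δ
  have hKΔ : K Δ = 2 * ∫ t in (0:ℝ)..Δ, (lsig + σ ^ 2 * lh t) := by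
    simp only [hKdef]
    rw [← intervalIntegral.integral_const_mul]
    apply intervalIntegral.integral_congr
    intro s hs
    rw [Set.uIcc_of_le hΔ0] at hs
    exact hkeq s hs
  set I : ℝ := ∫ t in (0:ℝ)..Δ, (lsig + σ ^ 2 * lh t) with hIdef
  have hEΔ : E Δ = Real.exp (2 * I) := by rw [hEdef]; simp only []; rw [hKΔ]
  have hexp : Real.exp (-I) ^ 2 = (Real.exp (2 * I))⁻¹ := by
    rw [sq, ← Real.exp_add, ← Real.exp_neg]
    ring_nf
  have huΔ : u Δ ≤ Real.exp (-I) ^ 2 * u 0 := by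
    have hpos := Real.exp_pos (2 * I)
    rw [hexp]
    rw [hEΔ] at hCineq
    calc u Δ = (Real.exp (2*I))⁻¹ * (Real.exp (2*I) * u Δ) := by field_simp
      _ ≤ (Real.exp (2*I))⁻¹ * u 0 := mul_le_mul_of_nonneg_left hCineq (inv_nonneg.2 hpos.le)
  have hgoal : ‖e Δ‖ ^ 2 ≤ (Real.exp (-I) * ‖e 0‖) ^ 2 := by
    have h9 : (Real.exp (-I) * ‖e 0‖) ^ 2 = Real.exp (-I) ^ 2 * ‖e 0‖ ^ 2 := by ring
    rw [h9]
    exact huΔ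
  calc ‖θ Δ - ϑ Δ‖ = Real.sqrt (‖e Δ‖ ^ 2) := (Real.sqrt_sq (norm_nonneg _)).symm
    _ ≤ Real.sqrt ((Real.exp (-I) * ‖e 0‖) ^ 2) := Real.sqrt_le_sqrt hgoal
    _ = Real.exp (-I) * ‖e 0‖ := Real.sqrt_sq (by positivity)


end
end

section
/- Let (φ_k)_{k∈ℕ} be functions φ_k : ℝ^p → (0,∞) and (ς_k)_{k∈ℕ} constants in (0,∞) satisfying the eigenfunction relation Q_{k+1}φ_{k+1} = ς_k·φ_k for all k ≥ 0, where Q_k(θ,dϑ) := g_{k−1}(θ)P_Δ(θ,dϑ). Let μ be a probability measure on ℝ^p such that π_k^μ(P_Δφ_{k+1}) < ∞ for all k ≥ 0, and define π_{k,∞}^μ(A) := π_k^μ(1_A·P_Δφ_{k+1}) / π_k^μ(P_Δφ_{k+1}) and the Markov kernels R_{k,∞}(θ,dϑ) := P_Δ(θ,dϑ)φ_k(ϑ)/(P_Δφ_k)(θ). Then for every k ≥ 1, π_{k,∞}^μ = π_{0,∞}^μ R_{1,∞} R_{2,∞} ⋯ R_{k,∞}. -/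
open MeasureTheory Filter Matrix
open scoped ENNReal NNReal RealInnerProductSpace BigOperators

noncomputable section

/-- The unnormalized measure
`A ↦ ∫ 1_A(θ_k) ∏_{j=0}^k g_j(θ_j) μ(dθ_0) P(θ_0,dθ_1) ⋯ P(θ_{k-1},dθ_k)`. -/
def chainMeas {p : ℕ} (P : Euc p → Measure (Euc p)) (g : ℕ → Euc p → ℝ)
    (μ0 : Measure (Euc p)) : ℕ → Measure (Euc p)
  | 0 => μ0.withDensity fun x => ENNReal.ofReal (g 0 x)
  | k + 1 => ((chainMeas P g μ0 k).bind P).withDensity fun x => ENNReal.ofReal (g (k + 1) x)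

/-- The `μ`-initialized filtering distribution `π_k^μ`. -/
def filterM {p : ℕ} (P : Euc p → Measure (Euc p)) (g : ℕ → Euc p → ℝ)
    (μ : Measure (Euc p)) (k : ℕ) : Measure (Euc p) :=
  (chainMeas P g μ k Set.univ)⁻¹ • chainMeas P g μ k

/-- The reweighted probability measure `μ·φ / μφ`. -/
def reweight {p : ℕ} (φ : Euc p → ℝ) (μ : Measure (Euc p)) : Measure (Euc p) :=
  (∫⁻ x, ENNReal.ofReal (φ x) ∂μ)⁻¹ •
    μ.withDensity fun x => ENNReal.ofReal (φ x)

/-- The Markov kernel `R_{k,∞}(θ,dϑ) = P_Δ(θ,dϑ) φ_k(ϑ) / (P_Δ φ_k)(θ)`. -/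
def RinfKer {p : ℕ} (P : Euc p → Measure (Euc p)) (φ : ℕ → Euc p → ℝ) (k : ℕ)
    (θ : Euc p) : Measure (Euc p) :=
  (ENNReal.ofReal (∫ x, φ k x ∂(P θ)))⁻¹ •
    ((P θ).withDensity fun x => ENNReal.ofReal (φ k x))

section AuxLemmas

variable {p : ℕ}

lemma aux_cancel {α : Type*} [MeasurableSpace α] (a b : ℝ≥0∞) (ha : a ≠ 0) (ha' : a ≠ ⊤)
    (W : Measure α) : (a * b)⁻¹ • (a • W) = b⁻¹ • W := by
  rw [ENNReal.mul_inv (Or.inl ha) (Or.inl ha'), smul_smul, mul_right_comm,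
    ENNReal.inv_mul_cancel ha ha', one_mul]

lemma aux_bind_congr_ae {α : Type*} [MeasurableSpace α] {f h : α → Measure α} {μ : Measure α}
    (hfh : f =ᵐ[μ] h) : μ.bind f = μ.bind h := by
  unfold Measure.bind
  rw [Measure.map_congr hfh]

lemma aux_bind_of_not_aemeasurable {α : Type*} [MeasurableSpace α] {f : α → Measure α}
    {μ : Measure α} (hf : ¬ AEMeasurable f μ) : μ.bind f = 0 := by
  unfold Measure.bind
  rw [Measure.map_of_not_aemeasurable hf, Measure.join_zero]

lemma reweight_zero (f : Euc p → ℝ) : reweight f (0 : Measure (Euc p)) = 0 := by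
  simp [reweight, withDensity_zero_left]

lemma reweight_smul (f : Euc p → ℝ) (μ : Measure (Euc p)) {a : ℝ≥0∞} (ha : a ≠ 0) (ha' : a ≠ ⊤) :
    reweight f (a • μ) = reweight f μ := by
  unfold reweight
  rw [lintegral_smul_measure, smul_eq_mul, withDensity_smul_measure, aux_cancel a _ ha ha']

end AuxLemmas
lemma step_lemma {p : ℕ} (P : Euc p → Measure (Euc p))
    (hPprob : ∀ θ, IsProbabilityMeasure (P θ))
    (g : ℕ → Euc p → ℝ) (hgm : ∀ k, Measurable (g k)) (hgpos : ∀ k θ, 0 < g k θ)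
    (φ : ℕ → Euc p → ℝ) (hφm : ∀ k, Measurable (φ k)) (hφpos : ∀ k θ, 0 < φ k θ)
    (ς : ℕ → ℝ) (hς : ∀ k, 0 < ς k)
    (Fmeas : ∀ k, Measurable (fun θ => ∫ x, φ (k + 1) x ∂(P θ)))
    (Fpos : ∀ k θ, 0 < ∫ x, φ (k + 1) x ∂(P θ))
    (hinteg : ∀ k θ, Integrable (φ k) (P θ))
    (heig : ∀ k θ, g k θ * ∫ x, φ (k + 1) x ∂(P θ) = ς k * φ k θ)
    (μ : Measure (Euc p))
    (hden : ∀ k, chainMeas P g μ k Set.univ ≠ ⊤)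
    (hfin : ∀ k, Integrable (fun θ => ∫ x, φ (k + 1) x ∂(P θ)) (filterM P g μ k))
    (k : ℕ) :
    reweight (fun θ => ∫ x, φ (k + 1 + 1) x ∂(P θ)) (filterM P g μ (k + 1)) =
      (reweight (fun θ => ∫ x, φ (k + 1) x ∂(P θ)) (filterM P g μ k)).bind
        (RinfKer P φ (k + 1)) := by
  classical
  -- notation
  set ν : Measure (Euc p) := chainMeas P g μ k with hν
  set h : Euc p → ℝ≥0∞ := fun x => ENNReal.ofReal (φ (k + 1) x) with hhdef
  have hh : Measurable h := ENNReal.measurable_ofReal.comp (hφm (k + 1))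
  have hhpos : ∀ x, h x ≠ 0 := fun x => (ENNReal.ofReal_pos.2 (hφpos (k + 1) x)).ne'
  have hhtop : ∀ x, h x ≠ ⊤ := fun x => ENNReal.ofReal_ne_top
  set E1 : Euc p → ℝ≥0∞ := fun θ => ENNReal.ofReal (∫ x, φ (k + 1) x ∂(P θ)) with hE1def
  have hE1 : Measurable E1 := ENNReal.measurable_ofReal.comp (Fmeas k)
  have hE1pos : ∀ θ, E1 θ ≠ 0 := fun θ => (ENNReal.ofReal_pos.2 (Fpos k θ)).ne'
  have hE1top : ∀ θ, E1 θ ≠ ⊤ := fun θ => ENNReal.ofReal_ne_top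
  set E2 : Euc p → ℝ≥0∞ := fun θ => ENNReal.ofReal (∫ x, φ (k + 1 + 1) x ∂(P θ)) with hE2def
  have hE2 : Measurable E2 := ENNReal.measurable_ofReal.comp (Fmeas (k + 1))
  set G : Euc p → ℝ≥0∞ := fun x => ENNReal.ofReal (g (k + 1) x) with hGdef
  have hG : Measurable G := ENNReal.measurable_ofReal.comp (hgm (k + 1))
  have hGpos : ∀ x, G x ≠ 0 := fun x => (ENNReal.ofReal_pos.2 (hgpos (k + 1) x)).ne'
  -- the eigenfunction identity in `ℝ≥0∞`
  set a : ℝ≥0∞ := ENNReal.ofReal (ς (k + 1)) with hadef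
  have ha0 : a ≠ 0 := (ENNReal.ofReal_pos.2 (hς (k + 1))).ne'
  have haT : a ≠ ⊤ := ENNReal.ofReal_ne_top
  have hkey : ∀ θ, G θ * E2 θ = a * h θ := by
    intro θ
    rw [hGdef, hE2def, ← ENNReal.ofReal_mul (hgpos (k + 1) θ).le, heig (k + 1) θ,
      hadef, hhdef, ENNReal.ofReal_mul (hς (k + 1)).le]
  -- `∫⁻ h ∂(P θ) = E1 θ`
  have hElint : ∀ θ, ∫⁻ x, h x ∂(P θ) = E1 θ := fun θ =>
    (ofReal_integral_eq_lintegral_ofReal (hinteg (k + 1) θ)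
      (Filter.Eventually.of_forall fun x => (hφpos (k + 1) x).le)).symm
  -- expressions for the filter measures
  have hfilterk : filterM P g μ k = (ν Set.univ)⁻¹ • ν := rfl
  have hfilterk1 : filterM P g μ (k + 1) =
      (chainMeas P g μ (k + 1) Set.univ)⁻¹ • chainMeas P g μ (k + 1) := rfl
  have hchain1 : chainMeas P g μ (k + 1) = (ν.bind P).withDensity G := rfl
  by_cases hν0 : ν = 0
  · -- degenerate case: everything is zero
    have h1 : chainMeas P g μ (k + 1) = 0 := by
      rw [hchain1, hν0, Measure.bind_zero_left, withDensity_zero_left]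
    have h2 : filterM P g μ (k + 1) = 0 := by
      rw [hfilterk1, h1]; simp
    have h3 : filterM P g μ k = 0 := by
      rw [hfilterk, hν0]; simp
    rw [h2, h3, reweight_zero, reweight_zero, Measure.bind_zero_left]
  -- now `ν ≠ 0`
  have hc0 : ν Set.univ ≠ 0 := fun hc => hν0 (Measure.measure_univ_eq_zero.mp hc)
  have hcT : ν Set.univ ≠ ⊤ := hden k
  have hfk : reweight (fun θ => ∫ x, φ (k + 1) x ∂(P θ)) (filterM P g μ k) =
      reweight (fun θ => ∫ x, φ (k + 1) x ∂(P θ)) ν := by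
    rw [hfilterk, reweight_smul _ _ (ENNReal.inv_ne_zero.2 hcT) (ENNReal.inv_ne_top.2 hc0)]
  -- the total integral `T`
  set T : ℝ≥0∞ := ∫⁻ θ, E1 θ ∂ν with hTdef
  have hT0 : T ≠ 0 := by
    rw [hTdef]
    refine (lintegral_pos_iff_support hE1).2 ?_ |>.ne'
    have : Function.support E1 = Set.univ := Set.eq_univ_of_forall fun θ => hE1pos θ
    rw [this]
    exact (Measure.measure_univ_pos.mpr hν0)
  have hTtop : T ≠ ⊤ := by
    have hint := (hfin k).2
    rw [HasFiniteIntegral] at hint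
    have heq : ∀ θ, ‖∫ x, φ (k + 1) x ∂(P θ)‖ₑ = E1 θ := fun θ =>
      Real.enorm_eq_ofReal (Fpos k θ).le
    rw [hfilterk] at hint
    rw [lintegral_smul_measure, smul_eq_mul] at hint
    simp only [heq] at hint
    intro hTT
    rw [hTdef] at hTT
    rw [hTT, ENNReal.mul_top (ENNReal.inv_ne_zero.2 hcT)] at hint
    exact (lt_irrefl _) hint
  have hrw : reweight (fun θ => ∫ x, φ (k + 1) x ∂(P θ)) ν = T⁻¹ • ν.withDensity E1 := rfl
  by_cases hQ : AEMeasurable P ν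
  · -- main case
    obtain ⟨Q, hQm, hQae⟩ := hQ
    have hbind : ν.bind P = ν.bind Q := aux_bind_congr_ae hQae
    -- `T = ∫⁻ h ∂(ν.bind Q)`
    have hTm : T = ∫⁻ x, h x ∂(ν.bind Q) := by
      rw [Measure.lintegral_bind hQm.aemeasurable hh.aemeasurable, hTdef]
      refine lintegral_congr_ae (hQae.mono fun θ hθ => ?_)
      show E1 θ = ∫⁻ x, h x ∂(Q θ)
      rw [← hθ]
      exact (hElint θ).symm
    -- total mass of `chainMeas (k+1)` is positive and finite
    have hm0 : ν.bind Q ≠ 0 := by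
      have huniv : (ν.bind Q) Set.univ = ν Set.univ := by
        rw [Measure.bind_apply MeasurableSet.univ hQm.aemeasurable]
        calc ∫⁻ θ, Q θ Set.univ ∂ν = ∫⁻ θ, 1 ∂ν := by
              refine lintegral_congr_ae (hQae.mono fun θ hθ => ?_)
              show Q θ Set.univ = 1
              rw [← hθ]
              exact (hPprob θ).measure_univ
          _ = ν Set.univ := by simp
      intro hm
      rw [hm] at huniv
      exact hc0 (by simpa using huniv.symm)
    have hc'0 : chainMeas P g μ (k + 1) Set.univ ≠ 0 := by
      rw [hchain1, hbind]
      rw [withDensity_apply _ MeasurableSet.univ, Measure.restrict_univ]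
      refine ((lintegral_pos_iff_support hG).2 ?_).ne'
      have : Function.support G = Set.univ := Set.eq_univ_of_forall fun x => hGpos x
      rw [this]
      exact Measure.measure_univ_pos.mpr hm0
    have hc'T : chainMeas P g μ (k + 1) Set.univ ≠ ⊤ := hden (k + 1)
    have hfk1 : reweight (fun θ => ∫ x, φ (k + 1 + 1) x ∂(P θ)) (filterM P g μ (k + 1)) =
        reweight (fun θ => ∫ x, φ (k + 1 + 1) x ∂(P θ)) ((ν.bind Q).withDensity G) := by
      rw [hfilterk1, reweight_smul _ _ (ENNReal.inv_ne_zero.2 hc'T) (ENNReal.inv_ne_top.2 hc'0),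
        hchain1, hbind]
    -- compute the LHS
    have hLHS : reweight (fun θ => ∫ x, φ (k + 1 + 1) x ∂(P θ)) ((ν.bind Q).withDensity G) =
        T⁻¹ • (ν.bind Q).withDensity h := by
      unfold reweight
      have hwd : ((ν.bind Q).withDensity G).withDensity E2 = a • (ν.bind Q).withDensity h := by
        rw [← withDensity_mul (ν.bind Q) hG hE2]
        have : (G * E2) = a • h := funext fun θ => by
          simp only [Pi.mul_apply, Pi.smul_apply, smul_eq_mul]; exact hkey θ
        rw [this, withDensity_smul a hh]
      have hN : ∫⁻ x, E2 x ∂((ν.bind Q).withDensity G) = a * T := by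
        rw [lintegral_withDensity_eq_lintegral_mul (ν.bind Q) hG hE2]
        have : (fun x => (G * E2) x) = fun x => a * h x := funext fun θ => hkey θ
        rw [this, lintegral_const_mul a hh, ← hTm]
      rw [hN, hwd, aux_cancel a T ha0 haT]
    -- the kernel and its measurable version
    set Rm : Euc p → Measure (Euc p) := fun θ => (E1 θ)⁻¹ • (Q θ).withDensity h with hRmdef
    have hRmM : Measurable Rm := by
      refine Measure.measurable_of_measurable_coe _ fun s hs => ?_
      have : (fun θ => Rm θ s) = fun θ => (E1 θ)⁻¹ * ∫⁻ x, s.indicator h x ∂(Q θ) := by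
        funext θ
        simp only [hRmdef, Measure.smul_apply, smul_eq_mul, withDensity_apply _ hs,
          lintegral_indicator hs]
      rw [this]
      exact hE1.inv.mul ((Measure.measurable_lintegral (hh.indicator hs)).comp hQm)
    have hRae : RinfKer P φ (k + 1) =ᵐ[ν] Rm := by
      refine hQae.mono fun θ hθ => ?_
      simp only [RinfKer, hRmdef, hE1def, hhdef, hθ]
    have hac : (T⁻¹ • ν.withDensity E1) ≪ ν := by
      refine Measure.AbsolutelyContinuous.mk fun s hs hνs => ?_
      rw [Measure.smul_apply, withDensity_apply _ hs, smul_eq_mul]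
      rw [Measure.restrict_eq_zero.2 hνs]
      simp
    have hRae' : RinfKer P φ (k + 1) =ᵐ[T⁻¹ • ν.withDensity E1] Rm := hac.ae_le hRae
    rw [hfk, hrw, hfk1, hLHS, aux_bind_congr_ae hRae']
    -- final computation, set by set
    ext s hs
    have hRms : Measurable fun θ => Rm θ s := (Measure.measurable_coe hs).comp hRmM
    rw [Measure.bind_apply hs hRmM.aemeasurable, lintegral_smul_measure, smul_eq_mul,
      lintegral_withDensity_eq_lintegral_mul ν hE1 hRms]
    have hpt : ∀ θ, (E1 * fun θ => Rm θ s) θ = ∫⁻ x in s, h x ∂(Q θ) := by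
      intro θ
      simp only [Pi.mul_apply, hRmdef, Measure.smul_apply, smul_eq_mul]
      rw [← mul_assoc, ENNReal.mul_inv_cancel (hE1pos θ) (hE1top θ), one_mul,
        withDensity_apply _ hs]
    rw [lintegral_congr hpt, Measure.smul_apply, smul_eq_mul, withDensity_apply _ hs]
    congr 1
    rw [← lintegral_indicator hs, Measure.lintegral_bind hQm.aemeasurable (hh.indicator hs).aemeasurable]
    refine lintegral_congr fun θ => ?_
    rw [lintegral_indicator hs]
  · -- non-measurable case: both sides are zero
    have h1 : chainMeas P g μ (k + 1) = 0 := by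
      rw [hchain1, aux_bind_of_not_aemeasurable hQ, withDensity_zero_left]
    have h2 : filterM P g μ (k + 1) = 0 := by
      rw [hfilterk1, h1]; simp
    rw [h2, reweight_zero, hfk, hrw]
    -- show the kernel is not a.e. measurable w.r.t. the reweighted measure
    have hνρ : ν ≪ T⁻¹ • ν.withDensity E1 := by
      refine Measure.AbsolutelyContinuous.mk fun s hs hρs => ?_
      rw [Measure.smul_apply, smul_eq_mul] at hρs
      rcases mul_eq_zero.mp hρs with hT | hws
      · exact absurd hT (ENNReal.inv_ne_zero.2 hTtop)
      · rw [withDensity_apply _ hs] at hws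
        have h3 := (setLIntegral_eq_zero_iff hs hE1).mp hws
        have h5 := ae_iff.mp h3
        have h6 : {a | ¬(a ∈ s → E1 a = 0)} = s := by
          ext x; simp [hE1pos x]
        rwa [h6] at h5
    by_cases hA : AEMeasurable (RinfKer P φ (k + 1)) (T⁻¹ • ν.withDensity E1)
    · exfalso
      have hAν : AEMeasurable (RinfKer P φ (k + 1)) ν := hA.mono_ac hνρ
      obtain ⟨Rm, hRmM, hRae⟩ := hAν
      set hinv : Euc p → ℝ≥0∞ := fun x => (h x)⁻¹ with hinvdef
      have hhinv : Measurable hinv := hh.inv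
      set Qm : Euc p → Measure (Euc p) := fun θ => E1 θ • (Rm θ).withDensity hinv with hQmdef
      have hQmM : Measurable Qm := by
        refine Measure.measurable_of_measurable_coe _ fun s hs => ?_
        have : (fun θ => Qm θ s) = fun θ => E1 θ * ∫⁻ x, s.indicator hinv x ∂(Rm θ) := by
          funext θ
          simp only [hQmdef, Measure.smul_apply, smul_eq_mul, withDensity_apply _ hs,
            lintegral_indicator hs]
        rw [this]
        exact hE1.mul ((Measure.measurable_lintegral (hhinv.indicator hs)).comp hRmM)
      refine hQ ⟨Qm, hQmM, ?_⟩
      refine hRae.mono fun θ hθ => Eq.symm ?_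
      show E1 θ • (Rm θ).withDensity hinv = P θ
      rw [← hθ]
      show E1 θ • ((ENNReal.ofReal (∫ x, φ (k + 1) x ∂(P θ)))⁻¹ •
          ((P θ).withDensity fun x => ENNReal.ofReal (φ (k + 1) x))).withDensity hinv = P θ
      rw [withDensity_smul_measure, smul_smul,
        ENNReal.mul_inv_cancel (hE1pos θ) (hE1top θ), one_smul,
        ← withDensity_mul _ hh hhinv]
      have hone : (h * hinv) = 1 := funext fun x => by
        simp only [Pi.mul_apply, hinvdef, Pi.one_apply]
        exact ENNReal.mul_inv_cancel (hhpos x) (hhtop x)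
      rw [hone, withDensity_one]
    · rw [aux_bind_of_not_aemeasurable hA]
/-- **Lemma 3.2** (first part): the smoothing measures `π_{k,∞}^μ` satisfy
`π_{k,∞}^μ = π_{0,∞}^μ R_{1,∞} ⋯ R_{k,∞}`. -/
theorem smoothing_measures_eq_composition
    {p : ℕ} (Δ : ℝ) (hΔ : 0 < Δ) (α : Euc p) (β : Matrix (Fin p) (Fin p) ℝ)
    (σ : ℝ) (hσ : 0 ≤ σ)
    (P : ℝ → Euc p → Measure (Euc p)) (hP : IsLinearSDEKernel P α β σ)
    (g : ℕ → Euc p → ℝ) (hgm : ∀ k, Measurable (g k)) (hgpos : ∀ k θ, 0 < g k θ)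
    (φ : ℕ → Euc p → ℝ) (hφm : ∀ k, Measurable (φ k)) (hφpos : ∀ k θ, 0 < φ k θ)
    (ς : ℕ → ℝ) (hς : ∀ k, 0 < ς k)
    (hinteg : ∀ k : ℕ, ∀ θ : Euc p, Integrable (φ k) (P Δ θ))
    (heig : ∀ k : ℕ, ∀ θ : Euc p,
      g k θ * ∫ x, φ (k + 1) x ∂(P Δ θ) = ς k * φ k θ)
    (μ : Measure (Euc p)) (hμ : IsProbabilityMeasure μ)
    (hden : ∀ k : ℕ, chainMeas (P Δ) g μ k Set.univ ≠ ⊤)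
    (hfin : ∀ k : ℕ, Integrable (fun θ => ∫ x, φ (k + 1) x ∂(P Δ θ))
      (filterM (P Δ) g μ k)) :
    ∀ k : ℕ, 1 ≤ k →
      reweight (fun θ => ∫ x, φ (k + 1) x ∂(P Δ θ)) (filterM (P Δ) g μ k) =
        (List.range k).foldl (fun m i => m.bind (RinfKer (P Δ) φ (i + 1)))
          (reweight (fun θ => ∫ x, φ 1 x ∂(P Δ θ)) (filterM (P Δ) g μ 0)) := by
  have hPprob : ∀ θ, IsProbabilityMeasure (P Δ θ) := fun θ => (hP Δ hΔ θ).1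
  have Fpos : ∀ k θ, 0 < ∫ x, φ (k + 1) x ∂(P Δ θ) := by
    intro k θ
    have h1 : 0 < g k θ * ∫ x, φ (k + 1) x ∂(P Δ θ) := by
      rw [heig k θ]; exact mul_pos (hς k) (hφpos k θ)
    rcases mul_pos_iff.mp h1 with ⟨_, h⟩ | ⟨hg', _⟩
    · exact h
    · exact absurd (hgpos k θ) (not_lt.2 hg'.le)
  have Fmeas : ∀ k, Measurable fun θ => ∫ x, φ (k + 1) x ∂(P Δ θ) := by
    intro k
    have heq : (fun θ => ∫ x, φ (k + 1) x ∂(P Δ θ)) = fun θ => (ς k * φ k θ) / g k θ := by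
      funext θ
      rw [eq_div_iff (hgpos k θ).ne', mul_comm]
      exact heig k θ
    rw [heq]
    exact (measurable_const.mul (hφm k)).div (hgm k)
  have hstep := step_lemma (P Δ) hPprob g hgm hgpos φ hφm hφpos ς hς Fmeas Fpos
    hinteg heig μ hden hfin
  intro k hk
  induction k, hk using Nat.le_induction with
  | base =>
    have h0 := hstep 0
    show _ = List.foldl _ _ [0]
    simp only [List.foldl_cons, List.foldl_nil]
    convert h0 using 2 <;> norm_num
  | succ n hn ih =>
    rw [List.range_succ, List.foldl_append, List.foldl_cons, List.foldl_nil, ← ih]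
    exact hstep n

end
end
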